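/- Let A be a unital C*-algebra and u, v ∈ A isometries with u·v = λ·v·u, |λ| = 1. Define ū := u(1 − vv*) + (1 − uu*)v* and p̄ := v(1 − uu*)v*. Then (1 − p̄)·ū·p̄ = (1 − vv*)·(1 − uu*)·v*, where 1 − p̄ is understood relative to the unit p = 1 − uvv*u* of the corner, i.e. (p − p̄)·ū·p̄ = (1 − vv*)(1 − uu*)v*. -/
import Mathlib


/-- For isometries `u, v` with `uv = λ•vu`, with `p := 1 - uvv*u*`,
`ū := u(1-vv*) + (1-uu*)v*` and `p̄ := v(1-uu*)v*`, one has
`(p - p̄) ū p̄ = (1-vv*)(1-uu*)v*`. -/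
theorem stmt_9 {A : Type*} [NormedRing A] [StarRing A] [CStarRing A]
    [NormedAlgebra ℂ A] [StarModule ℂ A] [CompleteSpace A]
    (u v : A) (hu : star u * u = 1) (hv : star v * v = 1)
    (l : ℂ) (hl : ‖l‖ = 1) (huv : u * v = l • (v * u)) :
    ((1 - u * v * star v * star u) - v * (1 - u * star u) * star v) *
        (u * (1 - v * star v) + (1 - u * star u) * star v) *
        (v * (1 - u * star u) * star v)
      = (1 - v * star v) * (1 - u * star u) * star v := by
  have hstar : star v * star u = (starRingEnd ℂ) l • (star u * star v) := by
    have := congrArg star huv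
    simpa [star_mul, star_smul] using this
  -- key: star u * star v * (1 - u * star u) = 0
  have hl0 : (starRingEnd ℂ) l ≠ 0 := by
    simp only [ne_eq, map_eq_zero]
    intro h; rw [h] at hl; simp at hl
  have key : star u * star v * (1 - u * star u) = 0 := by
    have h1 : star v * star u * (1 - u * star u) = 0 := by
      rw [mul_sub, mul_one, mul_assoc, ← mul_assoc (star u) u, hu, one_mul,
        sub_self]
    have h2 : ((starRingEnd ℂ) l • (star u * star v)) * (1 - u * star u) = 0 := by
      rw [← hstar]; exact h1
    rw [smul_mul_assoc, smul_eq_zero] at h2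
    exact h2.resolve_left hl0
  -- step A : ū * p̄ = (1 - u * star u) * star v
  have hA : (u * (1 - v * star v) + (1 - u * star u) * star v) *
      (v * (1 - u * star u) * star v) = (1 - u * star u) * star v := by
    have e1 : u * (1 - v * star v) * v = 0 := by
      rw [mul_sub, mul_one, sub_mul, mul_assoc, mul_assoc v (star v) v, hv, mul_one,
        sub_self]
    have e2 : (1 - u * star u) * star v * v = 1 - u * star u := by
      rw [mul_assoc, hv, mul_one]
    have e3 : (1 - u * star u) * (1 - u * star u) = 1 - u * star u := by
      rw [mul_sub, mul_one, sub_mul, one_mul, mul_assoc, ← mul_assoc (star u) u (star u),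
        hu, one_mul, sub_self, sub_zero]
    calc (u * (1 - v * star v) + (1 - u * star u) * star v) *
        (v * (1 - u * star u) * star v)
        = (u * (1 - v * star v) * v) * ((1 - u * star u) * star v)
          + ((1 - u * star u) * star v * v) * ((1 - u * star u) * star v) := by
          noncomm_ring
      _ = (1 - u * star u) * ((1 - u * star u) * star v) := by
          rw [e1, e2, zero_mul, zero_add]
      _ = (1 - u * star u) * star v := by rw [← mul_assoc, e3]
  -- step B
  have hB : (u * v * star v * star u) * ((1 - u * star u) * star v) = 0 := by
    have : star u * (1 - u * star u) = 0 := by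
      rw [mul_sub, mul_one, ← mul_assoc, hu, one_mul, sub_self]
    calc (u * v * star v * star u) * ((1 - u * star u) * star v)
        = u * v * star v * (star u * (1 - u * star u)) * star v := by noncomm_ring
      _ = 0 := by rw [this, mul_zero, zero_mul]
  -- step C
  have hC : (v * (1 - u * star u) * star v) * ((1 - u * star u) * star v)
      = v * star v * ((1 - u * star u) * star v) := by
    have e : (1 - u * star u) * star v * (1 - u * star u)
        = star v * (1 - u * star u) := by
      rw [sub_mul, one_mul, sub_mul, mul_assoc u (star u) (star v),
        mul_assoc u (star u * star v), key, mul_zero, sub_zero]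
    calc (v * (1 - u * star u) * star v) * ((1 - u * star u) * star v)
        = v * ((1 - u * star u) * star v * (1 - u * star u)) * star v := by
          noncomm_ring
      _ = v * (star v * (1 - u * star u)) * star v := by rw [e]
      _ = v * star v * ((1 - u * star u) * star v) := by noncomm_ring
  calc ((1 - u * v * star v * star u) - v * (1 - u * star u) * star v) *
        (u * (1 - v * star v) + (1 - u * star u) * star v) *
        (v * (1 - u * star u) * star v)
      = ((1 - u * v * star v * star u) - v * (1 - u * star u) * star v) *
        ((u * (1 - v * star v) + (1 - u * star u) * star v) *
        (v * (1 - u * star u) * star v)) := by rw [mul_assoc]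
    _ = ((1 - u * v * star v * star u) - v * (1 - u * star u) * star v) *
        ((1 - u * star u) * star v) := by rw [hA]
    _ = (1 - u * star u) * star v
        - (u * v * star v * star u) * ((1 - u * star u) * star v)
        - (v * (1 - u * star u) * star v) * ((1 - u * star u) * star v) := by
        noncomm_ring
    _ = (1 - u * star u) * star v - 0 - v * star v * ((1 - u * star u) * star v) := by
        rw [hB, hC]
    _ = (1 - v * star v) * (1 - u * star u) * star v := by noncomm_ring
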